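/- arXiv:2512.08836 — 4 statements merged into one kernel-verified Lean document; each statement's English description precedes it below -/
import Mathlib

section
/- Let f : X → X be a continuous map of a compact metric space and let (A_n) be a sequence of closed subsets of X, each internally chain transitive for f, converging in the Hausdorff metric to a closed set C. If every point of C is periodic for f, then C has finitely many connected components which form a single periodic cycle under f. -/
open TopologicalSpace Metric Set Filter

/-- The induced map on the hyperspace of nonempty compact (= closed) subsets. -/
noncomputable def hyper {X : Type*} [MetricSpace X] (f : X ≃ₜ X) :
    NonemptyCompacts X → NonemptyCompacts X :=
  fun A => ⟨⟨f '' A, A.isCompact.image f.continuous⟩, A.nonempty.image f⟩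

/-- `x` is uniformly recurrent for `g`. -/
def IsUnifRec {α : Type*} [MetricSpace α] (g : α → α) (x : α) : Prop :=
  ∀ ε > (0:ℝ), ∃ N > 0, ∀ k : ℕ, dist (g^[k * N] x) x < ε

/-- `x` is recurrent for `g` (it belongs to its own ω-limit set). -/
def IsRec {α : Type*} [MetricSpace α] (g : α → α) (x : α) : Prop :=
  ∀ ε > (0:ℝ), ∀ m : ℕ, ∃ n ≥ m, 0 < n ∧ dist (g^[n] x) x < ε

/-- `x` is almost periodic for `g`. -/
def IsAP {α : Type*} [MetricSpace α] (g : α → α) (x : α) : Prop :=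
  ∀ ε > (0:ℝ), ∃ N : ℕ, ∀ n : ℕ, ∃ i < N, dist (g^[n + i] x) x < ε

/-- `(x, y)` is an asymptotic pair for `g`. -/
def Asymp {α : Type*} [MetricSpace α] (g : α → α) (x y : α) : Prop :=
  Filter.Tendsto (fun n => dist (g^[n] x) (g^[n] y)) Filter.atTop (nhds 0)

/-- `(x, y)` is a proximal pair for `g`. -/
def Proximal {α : Type*} [MetricSpace α] (g : α → α) (x y : α) : Prop :=
  ∀ ε > (0:ℝ), ∀ m : ℕ, ∃ n ≥ m, dist (g^[n] x) (g^[n] y) < ε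

/-- The ω-limit set of `x` under `g`. -/
def omegaSet {α : Type*} [MetricSpace α] (g : α → α) (x : α) : Set α :=
  {y | ∀ ε > (0:ℝ), ∀ m : ℕ, ∃ n ≥ m, dist (g^[n] x) y < ε}

/-- `M` is a minimal set of `g`. -/
def IsMinimalFor {α : Type*} [TopologicalSpace α] (g : α → α) (M : Set α) : Prop :=
  M.Nonempty ∧ IsClosed M ∧ Set.MapsTo g M M ∧
    ∀ M' ⊆ M, M'.Nonempty → IsClosed M' → Set.MapsTo g M' M' → M' = M

/-- `A` is internally chain transitive for `g`. -/
def ICT {α : Type*} [MetricSpace α] (g : α → α) (A : Set α) : Prop :=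
  ∀ a ∈ A, ∀ b ∈ A, ∀ ε > (0:ℝ), ∃ N : ℕ, 1 ≤ N ∧ ∃ c : ℕ → α,
    c 0 = a ∧ c N = b ∧ (∀ i ≤ N, c i ∈ A) ∧ ∀ i < N, dist (g (c i)) (c (i + 1)) < ε

open Function

section StmtAux

variable {Y : Type*}

private lemma comp_subset_clopen [TopologicalSpace Y] {Z : Set Y} {x : Y}
    (hZ : IsClopen Z) (hx : x ∈ Z) : connectedComponent x ⊆ Z :=
  isPreconnected_connectedComponent.subset_isClopen hZ ⟨x, mem_connectedComponent, hx⟩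


private lemma cc_eq_of_mem [TopologicalSpace Y] {x y : Y} (h : y ∈ connectedComponent x) :
    connectedComponent y = connectedComponent x := (connectedComponent_eq h).symm

private lemma comp_congr [TopologicalSpace Y] {F : Y → Y} (hF : Continuous F) {x y : Y}
    (h : connectedComponent x = connectedComponent y) :
    connectedComponent (F x) = connectedComponent (F y) := by
  have hy : y ∈ connectedComponent x := h ▸ mem_connectedComponent
  have h2 : F y ∈ connectedComponent (F x) :=
    hF.image_connectedComponent_subset x ⟨y, hy, rfl⟩
  exact (cc_eq_of_mem h2).symm

private lemma comp_congr_iter [TopologicalSpace Y] {F : Y → Y} (hF : Continuous F) (n : ℕ)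
    {x y : Y} (h : connectedComponent x = connectedComponent y) :
    connectedComponent (F^[n] x) = connectedComponent (F^[n] y) := by
  induction n with
  | zero => simpa using h
  | succ n ih => rw [iterate_succ_apply', iterate_succ_apply']; exact comp_congr hF ih

private lemma iter_fix_mul {F : Y → Y} {x : Y} {n : ℕ} (h : F^[n] x = x) (k : ℕ) :
    F^[k * n] x = x := by
  induction k with
  | zero => simp
  | succ k ih => rw [Nat.succ_mul, Function.iterate_add_apply, h, ih]

private lemma per_surj {F : Y → Y} (hper : ∀ y : Y, ∃ n > 0, F^[n] y = y) :
    Function.Surjective F := fun y => by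
  obtain ⟨n, hn, h⟩ := hper y
  refine ⟨F^[n - 1] y, ?_⟩
  have h2 : F^[n - 1 + 1] y = y := by rw [Nat.sub_add_cancel hn]; exact h
  rwa [iterate_succ_apply'] at h2

private lemma comp_inj [TopologicalSpace Y] {F : Y → Y} (hF : Continuous F)
    (hper : ∀ y : Y, ∃ n > 0, F^[n] y = y) {x y : Y}
    (h : connectedComponent (F x) = connectedComponent (F y)) :
    connectedComponent x = connectedComponent y := by
  obtain ⟨p, hp, hx⟩ := hper x
  obtain ⟨q, hq, hy⟩ := hper y
  have h2 := comp_congr_iter hF (p * q - 1) h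
  rw [← iterate_succ_apply, ← iterate_succ_apply] at h2
  have epq : (p * q - 1).succ = p * q := by
    have := Nat.mul_pos hp hq; omega
  rw [epq] at h2
  have e1 : F^[p * q] x = x := by
    have := iter_fix_mul hx q; rwa [Nat.mul_comm] at this
  have e2 : F^[p * q] y = y := iter_fix_mul hy p
  rwa [e1, e2] at h2

private lemma comp_inj_iter [TopologicalSpace Y] {F : Y → Y} (hF : Continuous F)
    (hper : ∀ y : Y, ∃ n > 0, F^[n] y = y) :
    ∀ (n : ℕ) {x y : Y}, connectedComponent (F^[n] x) = connectedComponent (F^[n] y) →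
      connectedComponent x = connectedComponent y := by
  intro n
  induction n with
  | zero => intro x y h; simpa using h
  | succ n ih =>
    intro x y h
    rw [iterate_succ_apply', iterate_succ_apply'] at h
    exact ih (comp_inj hF hper h)

private lemma clopen_between [TopologicalSpace Y] [T2Space Y] [CompactSpace Y] {x : Y}
    {O : Set Y} (hO : IsOpen O) (h : connectedComponent x ⊆ O) :
    ∃ Z : Set Y, IsClopen Z ∧ x ∈ Z ∧ Z ⊆ O := by
  have hcc := connectedComponent_eq_iInter_isClopen x
  have hcompl : IsCompact Oᶜ := hO.isClosed_compl.isCompact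
  have hempty : Oᶜ ∩ ⋂ s : { s : Set Y // IsClopen s ∧ x ∈ s }, (s : Set Y) = ∅ := by
    rw [← hcc]
    apply Set.eq_empty_of_forall_notMem
    rintro z ⟨hz1, hz2⟩
    exact hz1 (h hz2)
  obtain ⟨u, hu⟩ := hcompl.elim_finite_subfamily_closed _ (fun s => s.2.1.1) hempty
  refine ⟨⋂ s ∈ u, (s : Set Y), isClopen_biInter_finset fun s _ => s.2.1, ?_, ?_⟩
  · exact mem_iInter₂.2 fun s _ => s.2.2
  · intro z hz
    by_contra hzO
    exact absurd hu (Set.Nonempty.ne_empty ⟨z, hzO, hz⟩)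

private lemma isClosed_T [TopologicalSpace Y] [T2Space Y] [CompactSpace Y] {F : Y → Y}
    (hF : Continuous F) (p : ℕ) :
    IsClosed {y : Y | F^[p] y ∈ connectedComponent y} := by
  rw [← isOpen_compl_iff, isOpen_iff_forall_mem_open]
  intro x hx
  have hcc := connectedComponent_eq_iInter_isClopen x
  have hex : ∃ s : { s : Set Y // IsClopen s ∧ x ∈ s }, F^[p] x ∉ (s : Set Y) := by
    by_contra hall
    push_neg at hall
    exact hx (by rw [Set.mem_setOf_eq, hcc]; exact mem_iInter.2 hall)
  obtain ⟨⟨Z, hZ, hxZ⟩, hFp⟩ := hex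
  refine ⟨Z ∩ F^[p] ⁻¹' Zᶜ, ?_, ?_, hxZ, hFp⟩
  · rintro y ⟨hyZ, hyP⟩ hyT
    exact hyP (comp_subset_clopen hZ hyZ hyT)
  · exact hZ.2.inter ((hZ.1.isOpen_compl).preimage (hF.iterate p))

private def satSet [TopologicalSpace Y] (F : Y → Y) (n : ℕ) (s : Set Y) : Set Y :=
  {y | ∃ x ∈ s, F^[n] x ∈ connectedComponent y}

private lemma isClosed_satSet [TopologicalSpace Y] [T2Space Y] [CompactSpace Y] {F : Y → Y}
    (hF : Continuous F) (n : ℕ) {s : Set Y} (hs : IsClosed s) : IsClosed (satSet F n s) := by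
  rw [← isOpen_compl_iff, isOpen_iff_forall_mem_open]
  intro y hy
  have himg : IsClosed (F^[n] '' s) := (hs.isCompact.image (hF.iterate n)).isClosed
  have hsub : connectedComponent y ⊆ (F^[n] '' s)ᶜ := by
    rintro z hz ⟨x, hxs, hxz⟩
    exact hy ⟨x, hxs, by rw [hxz]; exact hz⟩
  obtain ⟨Z, hZ, hyZ, hZsub⟩ := clopen_between himg.isOpen_compl hsub
  refine ⟨Z, ?_, hZ.2, hyZ⟩
  rintro z hzZ ⟨x, hxs, hxz⟩
  exact hZsub (comp_subset_clopen hZ hzZ hxz) ⟨x, hxs, rfl⟩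

private lemma satSet_compl [TopologicalSpace Y] {F : Y → Y} (hF : Continuous F)
    (hper : ∀ y : Y, ∃ n > 0, F^[n] y = y) {W : Set Y} (hW : IsClopen W) (n : ℕ) :
    satSet F n Wᶜ = (satSet F n W)ᶜ := by
  ext y
  constructor
  · rintro ⟨x', hx', hx'y⟩ ⟨x, hx, hxy⟩
    have hcc : connectedComponent (F^[n] x) = connectedComponent (F^[n] x') := by
      rw [cc_eq_of_mem hxy, cc_eq_of_mem hx'y]
    have hxx := comp_inj_iter hF hper n hcc
    exact hx' (comp_subset_clopen hW hx (by rw [hxx]; exact mem_connectedComponent))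
  · intro hy
    obtain ⟨x, hx⟩ := (per_surj hper).iterate n y
    by_cases hxW : x ∈ W
    · exact absurd ⟨x, hxW, by rw [hx]; exact mem_connectedComponent⟩ hy
    · exact ⟨x, hxW, by rw [hx]; exact mem_connectedComponent⟩

private lemma isClopen_satSet [TopologicalSpace Y] [T2Space Y] [CompactSpace Y] {F : Y → Y}
    (hF : Continuous F) (hper : ∀ y : Y, ∃ n > 0, F^[n] y = y) {W : Set Y} (hW : IsClopen W)
    (n : ℕ) : IsClopen (satSet F n W) := by
  refine ⟨isClosed_satSet hF n hW.1, ?_⟩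
  rw [← isClosed_compl_iff, ← satSet_compl hF hper hW n]
  exact isClosed_satSet hF n hW.compl.1

private lemma clopen_inv_eq_univ [MetricSpace Y] [CompactSpace Y] {F : Y → Y}
    (hchain : ∀ a b : Y, ∀ ε > (0:ℝ), ∃ N, 1 ≤ N ∧ ∃ c : ℕ → Y,
      c 0 = a ∧ c N = b ∧ ∀ i < N, dist (F (c i)) (c (i + 1)) < ε)
    {E : Set Y} (hE : IsClopen E) (hinv : ∀ x ∈ E, F x ∈ E) (hne : E.Nonempty) :
    E = Set.univ := by
  by_contra hne2
  obtain ⟨b, hb⟩ : ∃ b, b ∉ E := by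
    by_contra hall
    push_neg at hall
    exact hne2 (Set.eq_univ_of_forall hall)
  have hEc : IsClosed Eᶜ := hE.2.isClosed_compl
  have hpos : ∀ x ∈ E, 0 < infDist x Eᶜ := fun x hx =>
    (hEc.notMem_iff_infDist_pos ⟨b, hb⟩).1 (by simpa using hx)
  obtain ⟨x₀, hx₀E, hx₀min⟩ :=
    hE.1.isCompact.exists_isMinOn hne (continuous_infDist_pt Eᶜ).continuousOn
  set δ := infDist x₀ Eᶜ with hδ
  have hδpos : 0 < δ := hpos x₀ hx₀E
  obtain ⟨a, ha⟩ := hne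
  obtain ⟨N, hN, c, hc0, hcN, hstep⟩ := hchain a b δ hδpos
  have hmem : ∀ i, i ≤ N → c i ∈ E := by
    intro i
    induction i with
    | zero => intro _; rwa [hc0]
    | succ i ih =>
      intro hi
      have hci := ih (Nat.le_of_succ_le hi)
      have hFc := hinv _ hci
      by_contra hout
      have h1 : infDist (F (c i)) Eᶜ ≤ dist (F (c i)) (c (i + 1)) :=
        infDist_le_dist_of_mem (by simpa using hout)
      have h2 : δ ≤ infDist (F (c i)) Eᶜ := isMinOn_iff.mp hx₀min _ hFc
      have h3 := hstep i (Nat.lt_of_succ_le hi)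
      linarith
  exact hb (hcN ▸ hmem N le_rfl)

private lemma exists_clopen_T [MetricSpace Y] [CompactSpace Y] [Nonempty Y] {F : Y → Y}
    (hF : Continuous F) (hper : ∀ y : Y, ∃ n > 0, F^[n] y = y) :
    ∃ p, 0 < p ∧ ∃ W : Set Y, IsClopen W ∧ W.Nonempty ∧
      ∀ y ∈ W, F^[p] y ∈ connectedComponent y := by
  by_contra hcon
  push_neg at hcon
  have step : ∀ (p : ℕ) (W : Set Y), ∃ Z : Set Y, IsClopen W → W.Nonempty →
      (IsClopen Z ∧ Z.Nonempty ∧ Z ⊆ W ∧ ∀ y ∈ Z, F^[p + 1] y ∉ connectedComponent y) := by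
    intro p W
    by_cases h : IsClopen W ∧ W.Nonempty
    · obtain ⟨hW, hWne⟩ := h
      obtain ⟨x, hxW, hx⟩ := hcon (p + 1) (Nat.succ_pos p) W hW hWne
      have hccW : connectedComponent x ⊆ W := comp_subset_clopen hW hxW
      have hccT : connectedComponent x ⊆ {y : Y | F^[p + 1] y ∈ connectedComponent y}ᶜ := by
        intro z hz hzT
        have hzx : connectedComponent z = connectedComponent x := cc_eq_of_mem hz
        apply hx
        have h2 : connectedComponent (F^[p + 1] z) = connectedComponent (F^[p + 1] x) :=
          comp_congr_iter hF (p + 1) hzx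
        have h4 : F^[p + 1] x ∈ connectedComponent (F^[p + 1] x) := mem_connectedComponent
        rw [← h2, cc_eq_of_mem (hzT : F^[p + 1] z ∈ connectedComponent z), hzx] at h4
        exact h4
      have hopen : IsOpen (W ∩ {y : Y | F^[p + 1] y ∈ connectedComponent y}ᶜ) :=
        hW.2.inter (isClosed_T hF (p + 1)).isOpen_compl
      obtain ⟨Z, hZ, hxZ, hZsub⟩ := clopen_between hopen (Set.subset_inter hccW hccT)
      exact ⟨Z, fun _ _ => ⟨hZ, ⟨x, hxZ⟩, fun z hz => (hZsub hz).1, fun y hy => (hZsub hy).2⟩⟩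
    · exact ⟨∅, fun h1 h2 => absurd ⟨h1, h2⟩ h⟩
  choose pick hpick using step
  let seq : ℕ → Set Y := fun n => Nat.rec Set.univ (fun p W => pick p W) n
  have hseq : ∀ n, IsClopen (seq n) ∧ (seq n).Nonempty := by
    intro n
    induction n with
    | zero => exact ⟨isClopen_univ, Set.univ_nonempty⟩
    | succ n ih =>
      have h := hpick n (seq n) ih.1 ih.2
      exact ⟨h.1, h.2.1⟩
  have hsub : ∀ n, seq (n + 1) ⊆ seq n := fun n =>
    (hpick n (seq n) (hseq n).1 (hseq n).2).2.2.1
  have havoid : ∀ n, ∀ y ∈ seq (n + 1), F^[n + 1] y ∉ connectedComponent y := fun n =>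
    (hpick n (seq n) (hseq n).1 (hseq n).2).2.2.2
  obtain ⟨z, hz⟩ := IsCompact.nonempty_iInter_of_sequence_nonempty_isCompact_isClosed
    seq hsub (fun n => (hseq n).2) (hseq 0).1.1.isCompact (fun n => (hseq n).1.1)
  obtain ⟨n, hn, hfix⟩ := hper z
  have hzn : z ∈ seq n := Set.mem_iInter.1 hz n
  obtain ⟨m, rfl⟩ : ∃ m, n = m + 1 := ⟨n - 1, by omega⟩
  exact havoid m z hzn (by rw [hfix]; exact mem_connectedComponent)

private lemma main_aux {Y : Type*} [MetricSpace Y] [CompactSpace Y] [Nonempty Y]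
    {F : Y → Y} (hF : Continuous F)
    (hper : ∀ y : Y, ∃ n > 0, F^[n] y = y)
    (hchain : ∀ a b : Y, ∀ ε > (0:ℝ), ∃ N, 1 ≤ N ∧ ∃ c : ℕ → Y,
      c 0 = a ∧ c N = b ∧ ∀ i < N, dist (F (c i)) (c (i + 1)) < ε) :
    ∃ N, 0 < N ∧ ∃ a : Y,
      (∀ b : Y, ∃ i, i < N ∧ connectedComponent b = connectedComponent (F^[i] a)) ∧
      (∀ i, i < N →
        F '' connectedComponent (F^[i] a) = connectedComponent (F^[(i + 1) % N] a)) := by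
  classical
  obtain ⟨p, hp, W, hW, hWne, hWT⟩ := exists_clopen_T hF hper
  -- The union of the saturations of the iterated images of W is everything
  set E : Set Y := ⋃ n ∈ Finset.range p, satSet F n W with hEdef
  have hEclopen : IsClopen E :=
    isClopen_biUnion_finset fun n _ => isClopen_satSet hF hper hW n
  have hEinv : ∀ y ∈ E, F y ∈ E := by
    intro y hy
    rw [hEdef, Set.mem_iUnion₂] at hy ⊢
    obtain ⟨n, hn, x, hxW, hx⟩ := hy
    rw [Finset.mem_range] at hn
    by_cases h : n + 1 < p
    · refine ⟨n + 1, Finset.mem_range.2 h, x, hxW, ?_⟩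
      rw [iterate_succ_apply']
      exact hF.image_connectedComponent_subset y ⟨_, hx, rfl⟩
    · have hnp : n + 1 = p := by omega
      refine ⟨0, Finset.mem_range.2 hp, x, hxW, ?_⟩
      have h1 : connectedComponent (F^[n + 1] x) = connectedComponent (F y) := by
        rw [iterate_succ_apply']
        exact comp_congr hF (cc_eq_of_mem hx)
      rw [hnp] at h1
      have h2 : connectedComponent (F^[p] x) = connectedComponent x :=
        cc_eq_of_mem (hWT x hxW)
      simp only [iterate_zero, id_eq]
      rw [← h1, h2]
      exact mem_connectedComponent
  have hEne : E.Nonempty := by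
    obtain ⟨w, hw⟩ := hWne
    exact ⟨w, Set.mem_iUnion₂.2 ⟨0, Finset.mem_range.2 hp, w, hw, by
      simp only [iterate_zero, id_eq]; exact mem_connectedComponent⟩⟩
  have hEuniv : E = Set.univ := clopen_inv_eq_univ hchain hEclopen hEinv hEne
  have hTall : ∀ y : Y, F^[p] y ∈ connectedComponent y := by
    intro y
    have hy : y ∈ E := hEuniv ▸ Set.mem_univ y
    rw [hEdef, Set.mem_iUnion₂] at hy
    obtain ⟨n, hn, x, hxW, hx⟩ := hy
    have h1 : connectedComponent y = connectedComponent (F^[n] x) := (cc_eq_of_mem hx).symm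
    have h2 : connectedComponent (F^[p] y) = connectedComponent (F^[p] (F^[n] x)) :=
      comp_congr_iter hF p h1
    have h3 : F^[p] (F^[n] x) = F^[n] (F^[p] x) := by
      rw [← Function.iterate_add_apply, ← Function.iterate_add_apply, Nat.add_comm]
    have h4 : connectedComponent (F^[n] (F^[p] x)) = connectedComponent (F^[n] x) :=
      comp_congr_iter hF n (cc_eq_of_mem (hWT x hxW))
    have h5 : connectedComponent (F^[p] y) = connectedComponent y := by
      rw [h2, h3, h4, ← h1]
    rw [← h5]
    exact mem_connectedComponent
  -- reduction of iteration exponents mod a "component period"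
  have ccmod : ∀ (y : Y) (q : ℕ), 0 < q →
      connectedComponent (F^[q] y) = connectedComponent y →
      ∀ k, connectedComponent (F^[k] y) = connectedComponent (F^[k % q] y) := by
    intro y q hq hcyc k
    have hshift : ∀ k, connectedComponent (F^[k + q] y) = connectedComponent (F^[k] y) := by
      intro k
      have := comp_congr_iter hF k hcyc
      rwa [← Function.iterate_add_apply] at this
    induction k using Nat.strong_induction_on with
    | _ k ih =>
      by_cases hk : k < q
      · rw [Nat.mod_eq_of_lt hk]
      · push_neg at hk
        have h1 := hshift (k - q)
        rw [Nat.sub_add_cancel hk] at h1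
        rw [h1, ih (k - q) (by omega), Nat.mod_eq_sub_mod hk]
  obtain ⟨a⟩ := (inferInstance : Nonempty Y)
  have hccp : connectedComponent (F^[p] a) = connectedComponent a := cc_eq_of_mem (hTall a)
  -- every component belongs to the cycle of a
  have hcycle : ∀ b : Y, ∃ n, n < p ∧
      connectedComponent b = connectedComponent (F^[n] a) := by
    intro b
    by_contra hcon
    push_neg at hcon
    set B : Set Y := ⋃ m ∈ Finset.range p, connectedComponent (F^[m] b) with hBdef
    have hBclosed : IsClosed B :=
      isClosed_biUnion_finset fun m _ => isClosed_connectedComponent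
    have hdisj : ∀ n, n < p → connectedComponent (F^[n] a) ⊆ Bᶜ := by
      intro n hn z hz hzB
      rw [hBdef, Set.mem_iUnion₂] at hzB
      obtain ⟨m, hm, hzm⟩ := hzB
      rw [Finset.mem_range] at hm
      have h1 : connectedComponent (F^[m] b) = connectedComponent (F^[n] a) := by
        rw [← cc_eq_of_mem hzm, cc_eq_of_mem hz]
      have h2 := comp_congr_iter hF (p - m) h1
      have e1 : F^[p - m] (F^[m] b) = F^[p] b := by
        rw [← Function.iterate_add_apply, Nat.sub_add_cancel hm.le]
      have e2 : F^[p - m] (F^[n] a) = F^[p - m + n] a :=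
        (Function.iterate_add_apply F (p - m) n a).symm
      rw [e1, e2] at h2
      have h3 : connectedComponent b = connectedComponent (F^[(p - m + n) % p] a) := by
        rw [← cc_eq_of_mem (hTall b), h2, ccmod a p hp hccp (p - m + n)]
      exact hcon _ (Nat.mod_lt _ hp) h3
    have hZex : ∀ n, ∃ Z : Set Y, n < p → (IsClopen Z ∧ F^[n] a ∈ Z ∧ Z ⊆ Bᶜ) := by
      intro n
      by_cases hn : n < p
      · obtain ⟨Z, h1, h2, h3⟩ := clopen_between hBclosed.isOpen_compl (hdisj n hn)
        exact ⟨Z, fun _ => ⟨h1, h2, h3⟩⟩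
      · exact ⟨∅, fun h => absurd h hn⟩
    choose Z hZ using hZex
    set V : Set Y := ⋃ n ∈ Finset.range p, Z n with hVdef
    have hVclopen : IsClopen V := isClopen_biUnion_finset fun n hn =>
      (hZ n (Finset.mem_range.1 hn)).1
    set E' : Set Y := ⋂ n ∈ Finset.range p, F^[n] ⁻¹' V with hE'def
    have hE'clopen : IsClopen E' :=
      isClopen_biInter_finset fun n _ => hVclopen.preimage (hF.iterate n)
    have haE' : a ∈ E' := by
      rw [hE'def, Set.mem_iInter₂]
      intro n hn
      exact Set.mem_iUnion₂.2 ⟨n, hn, (hZ n (Finset.mem_range.1 hn)).2.1⟩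
    have hbE' : b ∉ E' := by
      intro hbmem
      rw [hE'def, Set.mem_iInter₂] at hbmem
      have hbV : b ∈ V := by
        have := hbmem 0 (Finset.mem_range.2 hp)
        simpa using this
      rw [hVdef, Set.mem_iUnion₂] at hbV
      obtain ⟨n, hn, hbZ⟩ := hbV
      have hbB : b ∈ B := by
        rw [hBdef]
        exact Set.mem_iUnion₂.2 ⟨0, Finset.mem_range.2 hp, by
          simp only [iterate_zero, id_eq]; exact mem_connectedComponent⟩
      exact (hZ n (Finset.mem_range.1 hn)).2.2 hbZ hbB
    have hE'inv : ∀ y ∈ E', F y ∈ E' := by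
      intro y hy
      rw [hE'def, Set.mem_iInter₂] at hy ⊢
      intro n hn'
      have hn : n < p := Finset.mem_range.1 hn'
      show F^[n] (F y) ∈ V
      by_cases h : n + 1 < p
      · have hmem := hy (n + 1) (Finset.mem_range.2 h)
        rw [Set.mem_preimage] at hmem
        have e : F^[n + 1] y = F^[n] (F y) := iterate_succ_apply F n y
        rwa [e] at hmem
      · have hnp : n + 1 = p := by omega
        have e : F^[n + 1] y = F^[n] (F y) := iterate_succ_apply F n y
        rw [← e, hnp]
        have hyV : y ∈ V := by
          have := hy 0 (Finset.mem_range.2 hp)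
          simpa using this
        rw [hVdef, Set.mem_iUnion₂] at hyV
        obtain ⟨k, hk, hyZ⟩ := hyV
        have hsub : connectedComponent y ⊆ Z k :=
          comp_subset_clopen (hZ k (Finset.mem_range.1 hk)).1 hyZ
        exact Set.mem_iUnion₂.2 ⟨k, hk, hsub (hTall y)⟩
    have huniv := clopen_inv_eq_univ hchain hE'clopen hE'inv ⟨a, haE'⟩
    exact hbE' (huniv ▸ Set.mem_univ b)
  -- minimal period of the component of a
  have hPex : ∃ n, 0 < n ∧ connectedComponent (F^[n] a) = connectedComponent a := ⟨p, hp, hccp⟩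
  set N := Nat.find hPex with hNdef
  obtain ⟨hN0, hNcc⟩ := Nat.find_spec hPex
  have hNmin : ∀ m, m < N → ¬(0 < m ∧ connectedComponent (F^[m] a) = connectedComponent a) :=
    fun m hm => Nat.find_min hPex hm
  have hmodN : ∀ k, connectedComponent (F^[k] a) = connectedComponent (F^[k % N] a) :=
    ccmod a N hN0 hNcc
  have hcov : ∀ b : Y, ∃ i, i < N ∧ connectedComponent b = connectedComponent (F^[i] a) := by
    intro b
    obtain ⟨n, hn, hb⟩ := hcycle b
    exact ⟨n % N, Nat.mod_lt _ hN0, by rw [hb, hmodN n]⟩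
  have hinj2 : ∀ i j, i < N → j < N →
      connectedComponent (F^[i] a) = connectedComponent (F^[j] a) → i = j := by
    intro i j hi hj hij
    by_contra hne
    wlog h : i < j generalizing i j
    · exact this j i hj hi hij.symm (Ne.symm hne) (by omega)
    have h2 := comp_congr_iter hF (N - j) hij
    have e1 : F^[N - j] (F^[j] a) = F^[N] a := by
      rw [← Function.iterate_add_apply, Nat.sub_add_cancel hj.le]
    have e2 : F^[N - j] (F^[i] a) = F^[N - j + i] a :=
      (Function.iterate_add_apply F (N - j) i a).symm
    rw [e1, e2, hNcc] at h2
    exact hNmin (N - j + i) (by omega) ⟨by omega, h2⟩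
  refine ⟨N, hN0, a, hcov, ?_⟩
  intro i hi
  apply Set.Subset.antisymm
  · rintro y ⟨z, hz, rfl⟩
    have h1 : F z ∈ connectedComponent (F (F^[i] a)) :=
      hF.image_connectedComponent_subset _ ⟨z, hz, rfl⟩
    have h2 : connectedComponent (F (F^[i] a)) = connectedComponent (F^[(i + 1) % N] a) := by
      have e : F (F^[i] a) = F^[i + 1] a := (iterate_succ_apply' F i a).symm
      rw [e]
      exact hmodN (i + 1)

    rwa [h2] at h1
  · intro y hy
    obtain ⟨z, hzeq⟩ := per_surj hper y
    obtain ⟨k, hk, hz⟩ := hcov z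
    have h1 : connectedComponent y = connectedComponent (F^[(i + 1) % N] a) :=
      (cc_eq_of_mem hy)
    have h2 : connectedComponent (F z) = connectedComponent (F^[(k + 1) % N] a) := by
      rw [comp_congr hF hz]
      have e : F (F^[k] a) = F^[k + 1] a := (iterate_succ_apply' F k a).symm
      rw [e]
      exact hmodN (k + 1)
    have heq : (k + 1) % N = (i + 1) % N := by
      apply hinj2 _ _ (Nat.mod_lt _ hN0) (Nat.mod_lt _ hN0)
      rw [← h2, hzeq, h1]
    have hki : k = i := by
      rcases Nat.lt_or_ge (k + 1) N with h | h
      · rw [Nat.mod_eq_of_lt h] at heq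
        rcases Nat.lt_or_ge (i + 1) N with h' | h'
        · rw [Nat.mod_eq_of_lt h'] at heq; omega
        · have hiN : i + 1 = N := by omega
          rw [hiN, Nat.mod_self] at heq; omega
      · have hkN : k + 1 = N := by omega
        rw [hkN, Nat.mod_self] at heq
        rcases Nat.lt_or_ge (i + 1) N with h' | h'
        · rw [Nat.mod_eq_of_lt h'] at heq; omega
        · omega
    subst hki
    exact ⟨z, by rw [← hz]; exact mem_connectedComponent, hzeq⟩

end StmtAux

section StmtAux2

/-- `A` is internally chain transitive for `g`. -/
private def ICT' {α : Type*} [MetricSpace α] (g : α → α) (A : Set α) : Prop :=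
  ∀ a ∈ A, ∀ b ∈ A, ∀ ε > (0:ℝ), ∃ N : ℕ, 1 ≤ N ∧ ∃ c : ℕ → α,
    c 0 = a ∧ c N = b ∧ (∀ i ≤ N, c i ∈ A) ∧ ∀ i < N, dist (g (c i)) (c (i + 1)) < ε

private lemma ICT_limit {X : Type*} [MetricSpace X] [CompactSpace X]
    {f : X → X} (hf : Continuous f)
    {A : ℕ → NonemptyCompacts X} (hict : ∀ n, ICT' f (A n : Set X))
    {C : NonemptyCompacts X}
    (hconv : Filter.Tendsto A Filter.atTop (nhds C)) :
    ICT' f (C : Set X) := by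
  intro a ha b hb ε hε
  obtain ⟨δ₁, hδ₁, hδ₁prop⟩ := Metric.uniformContinuous_iff.1
    (CompactSpace.uniformContinuous_of_continuous hf) (ε/3) (by linarith)
  set δ := min δ₁ (ε/3) with hδdef
  have hδpos : 0 < δ := lt_min hδ₁ (by linarith)
  obtain ⟨n, hn⟩ : ∃ n, dist (A n) C < δ := by
    obtain ⟨n, hn⟩ := (Metric.tendsto_atTop.1 hconv) δ hδpos
    exact ⟨n, hn n le_rfl⟩
  have hfin : EMetric.hausdorffEdist (A n : Set X) (C : Set X) ≠ ⊤ :=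
    Metric.hausdorffEdist_ne_top_of_nonempty_of_bounded (A n).nonempty C.nonempty
      (A n).isCompact.isBounded C.isCompact.isBounded
  have hdist : Metric.hausdorffDist (A n : Set X) (C : Set X) < δ := hn
  obtain ⟨a', ha', haa⟩ := Metric.exists_dist_lt_of_hausdorffDist_lt' ha hdist hfin
  obtain ⟨b', hb', hbb⟩ := Metric.exists_dist_lt_of_hausdorffDist_lt' hb hdist hfin
  obtain ⟨N, hN, c', hc'0, hc'N, hc'mem, hc'step⟩ := hict n a' ha' b' hb' δ hδpos
  have hlift : ∀ i, ∃ y, y ∈ (C : Set X) ∧ (i ≤ N → dist (c' i) y < δ) := by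
    intro i
    by_cases hi : i ≤ N
    · obtain ⟨y, hy, hdy⟩ :=
        Metric.exists_dist_lt_of_hausdorffDist_lt (hc'mem i hi) hdist hfin
      exact ⟨y, hy, fun _ => hdy⟩
    · exact ⟨a, ha, fun h => absurd h hi⟩
  choose y hyC hyd using hlift
  set c : ℕ → X := fun i => if i = 0 then a else if i = N then b else y i with hcdef
  have hcC : ∀ i, i ≤ N → c i ∈ (C : Set X) := by
    intro i hi
    simp only [hcdef]
    split
    · exact ha
    · split
      · exact hb
      · exact hyC i
  have hcd : ∀ i, i ≤ N → dist (c' i) (c i) < δ := by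
    intro i hi
    simp only [hcdef]
    split
    · next h => subst h; rw [hc'0]; exact haa
    · split
      · next h1 h2 => subst h2; rw [hc'N]; exact hbb
      · exact hyd i hi
  have hc0 : c 0 = a := by simp [hcdef]
  have hcN : c N = b := by
    have hN0 : N ≠ 0 := by omega
    simp [hcdef, hN0]
  refine ⟨N, hN, c, hc0, hcN, hcC, ?_⟩
  intro i hi
  have h1 : dist (f (c i)) (f (c' i)) < ε/3 := by
    apply hδ₁prop
    calc dist (c i) (c' i) = dist (c' i) (c i) := dist_comm _ _
    _ < δ := hcd i hi.le
    _ ≤ δ₁ := min_le_left _ _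
  have h2 : dist (f (c' i)) (c' (i + 1)) < δ := hc'step i hi
  have h3 : dist (c' (i + 1)) (c (i + 1)) < δ := hcd (i + 1) (by omega)
  have h4 := dist_triangle4 (f (c i)) (f (c' i)) (c' (i + 1)) (c (i + 1))
  have hδle : δ ≤ ε/3 := min_le_right _ _
  linarith

private lemma maps_of_ICT {X : Type*} [MetricSpace X] [CompactSpace X] {f : X → X}
    {C : NonemptyCompacts X} (h : ICT' f (C : Set X)) :
    Set.MapsTo f (C : Set X) (C : Set X) := by
  intro a ha
  have hcl : closure (C : Set X) = (C : Set X) := C.isCompact.isClosed.closure_eq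
  rw [← hcl, Metric.mem_closure_iff]
  intro ε hε
  obtain ⟨N, hN, c, hc0, hcN, hmem, hstep⟩ := h a ha a ha ε hε
  refine ⟨c 1, hmem 1 hN, ?_⟩
  have hs := hstep 0 (by omega)
  rwa [hc0] at hs

end StmtAux2

theorem stmt6 {X : Type*} [MetricSpace X] [CompactSpace X]
    (f : X → X) (hf : Continuous f)
    (A : ℕ → NonemptyCompacts X) (hict : ∀ n, ICT f (A n : Set X))
    (C : NonemptyCompacts X)
    (hconv : Filter.Tendsto A Filter.atTop (nhds C))
    (hper : ∀ x ∈ (C : Set X), ∃ n > 0, f^[n] x = x) :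
    ∃ N > 0, ∃ D : ℕ → Set X,
      (∀ x ∈ (C : Set X), ∃ i < N, connectedComponentIn (C : Set X) x = D i) ∧
      (∀ i < N, ∃ x ∈ (C : Set X), D i = connectedComponentIn (C : Set X) x) ∧
      (∀ i < N, f '' D i = D ((i + 1) % N)) := by
  have hC : ICT' f (C : Set X) := ICT_limit hf (fun n => hict n) hconv
  have hmaps : Set.MapsTo f (C : Set X) (C : Set X) := maps_of_ICT hC
  haveI : CompactSpace (C : Set X) := isCompact_iff_compactSpace.mp C.isCompact
  haveI : Nonempty (C : Set X) := C.nonempty.to_subtype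
  set F : ↥(C : Set X) → ↥(C : Set X) := fun z => ⟨f z.1, hmaps z.2⟩ with hFdef
  have hFcont : Continuous F := (hf.comp continuous_subtype_val).subtype_mk _
  have hval : ∀ (n : ℕ) (z : (C : Set X)), ((F^[n] z : ↥(C : Set X)) : X) = f^[n] (z : X) := by
    intro n
    induction n with
    | zero => intro z; simp
    | succ n ih =>
      intro z
      rw [Function.iterate_succ_apply, Function.iterate_succ_apply]
      exact ih (F z)
  have hperF : ∀ z : ↥(C : Set X), ∃ n > 0, F^[n] z = z := by
    intro z
    obtain ⟨n, hn, hz⟩ := hper z.1 z.2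
    exact ⟨n, hn, Subtype.ext (by rw [hval n z]; exact hz)⟩
  have hchainF : ∀ a b : ↥(C : Set X), ∀ ε > (0:ℝ), ∃ N, 1 ≤ N ∧ ∃ c : ℕ → ↥(C : Set X),
      c 0 = a ∧ c N = b ∧ ∀ i < N, dist (F (c i)) (c (i + 1)) < ε := by
    intro a b ε hε
    obtain ⟨N, hN, c, hc0, hcN, hmem, hstep⟩ := hC a.1 a.2 b.1 b.2 ε hε
    refine ⟨N, hN, fun i => if h : i ≤ N then ⟨c i, hmem i h⟩ else a, ?_, ?_, ?_⟩
    · simp only [dif_pos (Nat.zero_le N)]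
      exact Subtype.ext hc0
    · simp only [dif_pos (le_refl N)]
      exact Subtype.ext hcN
    · intro i hi
      simp only [dif_pos hi.le, dif_pos (Nat.succ_le_of_lt hi)]
      rw [Subtype.dist_eq]
      exact hstep i hi
  obtain ⟨N, hN0, a, hcov, himg⟩ := main_aux hFcont hperF hchainF
  refine ⟨N, hN0, fun i => Subtype.val '' connectedComponent (F^[i] a), ?_, ?_, ?_⟩
  · intro x hx
    obtain ⟨i, hi, hcc⟩ := hcov ⟨x, hx⟩
    exact ⟨i, hi, by rw [connectedComponentIn_eq_image hx, hcc]⟩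
  · intro i hi
    refine ⟨(F^[i] a).1, (F^[i] a).2, ?_⟩
    rw [connectedComponentIn_eq_image (F^[i] a).2]
  · intro i hi
    show f '' (Subtype.val '' connectedComponent (F^[i] a)) =
      Subtype.val '' connectedComponent (F^[(i + 1) % N] a)
    rw [← himg i hi, Set.image_image, Set.image_image]
end

section
/- Let f : X → X be a pointwise periodic homeomorphism of a compact metric space. Then every infinite minimal set of the induced map 2^f on the hyperspace is not totally minimal; i.e., if M ⊆ 2^X is an infinite minimal set for 2^f, then there exists n ≥ 2 such that M is not minimal for (2^f)^n. -/
open TopologicalSpace Metric Set Filter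

lemma hyper_iterate_coe {X : Type*} [MetricSpace X] (f : X ≃ₜ X) (n : ℕ)
    (A : NonemptyCompacts X) : ((hyper f)^[n] A : Set X) = (⇑f)^[n] '' A := by
  induction n with
  | zero => simp
  | succ n ih =>
      rw [Function.iterate_succ_apply']
      show (⇑f) '' ((hyper f)^[n] A : Set X) = _
      rw [ih, Function.iterate_succ', Function.comp_def]
      ext x
      simp [Set.image_image]

lemma isClosed_mem_hyper {X : Type*} [MetricSpace X] (p : X) :
    IsClosed {C : NonemptyCompacts X | p ∈ C} := by
  have h : {C : NonemptyCompacts X | p ∈ C}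
      = (fun C : NonemptyCompacts X => Metric.infDist p (C : Set X)) ⁻¹' {0} := by
    ext C
    simp only [Set.mem_setOf_eq, Set.mem_preimage, Set.mem_singleton_iff]
    exact (C.isCompact.isClosed.mem_iff_infDist_zero C.nonempty)
  rw [h]
  exact IsClosed.preimage (Metric.lipschitz_infDist_set p).continuous isClosed_singleton

theorem stmt10 {X : Type*} [MetricSpace X] [CompactSpace X]
    (f : X ≃ₜ X) (hper : ∀ x : X, ∃ n > 0, (⇑f)^[n] x = x)
    (M : Set (NonemptyCompacts X)) (hM : IsMinimalFor (hyper f) M)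
    (hinf : M.Infinite) :
    ∃ n ≥ 2, ¬ IsMinimalFor ((hyper f)^[n]) M := by
  -- Two distinct elements of `M`.
  obtain ⟨C₁, hC₁, C₂, hC₂, hne⟩ := hinf.nontrivial
  have hsets : (C₁ : Set X) ≠ (C₂ : Set X) := fun h => hne (SetLike.coe_injective h)
  have key : ∀ A ∈ M, ∀ B ∈ M, ∀ p : X, p ∈ A → p ∉ B →
      ∃ n ≥ 2, ¬ IsMinimalFor ((hyper f)^[n]) M := by
    intro A hA B hB p hpA hpB
    obtain ⟨N, hN, hfix⟩ := hper p
    refine ⟨2 * N, by omega, ?_⟩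
    intro hmin
    have hfix2 : (⇑f)^[2 * N] p = p := by
      rw [two_mul, Function.iterate_add_apply, hfix, hfix]
    have hsub : M ∩ {C | p ∈ C} ⊆ M := Set.inter_subset_left
    have hne' : (M ∩ {C | p ∈ C}).Nonempty := ⟨A, hA, hpA⟩
    have hcl : IsClosed (M ∩ {C : NonemptyCompacts X | p ∈ C}) :=
      IsClosed.inter hmin.2.1 (isClosed_mem_hyper p)
    have hmaps : Set.MapsTo ((hyper f)^[2 * N]) (M ∩ {C | p ∈ C}) (M ∩ {C | p ∈ C}) := by
      rintro C ⟨hCM, hpC⟩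
      refine ⟨hmin.2.2.1 hCM, ?_⟩
      show p ∈ ((hyper f)^[2 * N] C : Set X)
      rw [hyper_iterate_coe]
      exact ⟨p, hpC, hfix2⟩
    have heq := hmin.2.2.2 _ hsub hne' hcl hmaps
    rw [← heq] at hB
    exact hpB hB.2
  by_cases h : (C₁ : Set X) ⊆ (C₂ : Set X)
  · obtain ⟨p, hp2, hp1⟩ := Set.not_subset.1 fun h' => hsets (Set.Subset.antisymm h h')
    exact key C₂ hC₂ C₁ hC₁ p hp2 hp1
  · obtain ⟨p, hp1, hp2⟩ := Set.not_subset.1 h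
    exact key C₁ hC₁ C₂ hC₂ p hp1 hp2
end

section
/- Let f : X → X be a pointwise periodic homeomorphism of a compact metric space. If A, B ∈ 2^X are uniformly recurrent points of 2^f with A ∩ B ≠ ∅, then A ∩ B is a uniformly recurrent point of 2^f. That is, the class of uniformly recurrent closed sets under 2^f is stable under (nonempty) finite intersection. -/
open TopologicalSpace Metric Set Filter

lemma hyper_iterate {X : Type*} [MetricSpace X] (f : X ≃ₜ X) (n : ℕ) (A : NonemptyCompacts X) :
    (((hyper f)^[n] A : NonemptyCompacts X) : Set X) = (⇑f)^[n] '' (A : Set X) := by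
  induction n with
  | zero => simp
  | succ n ih =>
    rw [Function.iterate_succ', Function.comp_apply, Function.iterate_succ',
      Set.image_comp, ← ih]
    rfl

theorem stmt12 {X : Type*} [MetricSpace X] [CompactSpace X]
    (f : X ≃ₜ X) (hper : ∀ x : X, ∃ n > 0, (⇑f)^[n] x = x)
    (A B : NonemptyCompacts X)
    (hA : IsUnifRec (hyper f) A) (hB : IsUnifRec (hyper f) B)
    (C : NonemptyCompacts X) (hC : (C : Set X) = (A : Set X) ∩ (B : Set X)) :
    IsUnifRec (hyper f) C := by
  intro ε hε
  have hε2 : (0:ℝ) < ε / 2 := by linarith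
  -- Step 1: find δ > 0 such that being δ-close to both A and B implies ε/2-close to C
  obtain ⟨δ, hδ0, hδ⟩ : ∃ δ > (0:ℝ), ∀ y : X,
      infDist y (A : Set X) < δ → infDist y (B : Set X) < δ → infDist y (C : Set X) < ε / 2 := by
    set K : Set X := {y : X | ε / 2 ≤ infDist y (C : Set X)} with hK
    have hKclosed : IsClosed K :=
      isClosed_le continuous_const (continuous_infDist_pt _)
    have hKcompact : IsCompact K := hKclosed.isCompact
    rcases K.eq_empty_or_nonempty with hKe | hKne
    · refine ⟨1, one_pos, fun y _ _ => ?_⟩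
      by_contra h
      have hyK : y ∈ K := le_of_not_gt h
      rw [hKe] at hyK
      exact hyK
    · set h : X → ℝ := fun y => max (infDist y (A : Set X)) (infDist y (B : Set X)) with hh
      have hcont : ContinuousOn h K :=
        ((continuous_infDist_pt _).max (continuous_infDist_pt _)).continuousOn
      obtain ⟨y₀, hy₀K, hy₀min⟩ := hKcompact.exists_isMinOn hKne hcont
      have hy₀pos : 0 < h y₀ := by
        rcases eq_or_lt_of_le (le_max_of_le_left infDist_nonneg : (0:ℝ) ≤ h y₀) with hp | hp
        · exfalso
          have hA0 : infDist y₀ (A : Set X) = 0 :=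
            le_antisymm (hp ▸ le_max_left _ _) infDist_nonneg
          have hB0 : infDist y₀ (B : Set X) = 0 :=
            le_antisymm (hp ▸ le_max_right _ _) infDist_nonneg
          have hyC : y₀ ∈ (C : Set X) := by
            rw [hC]
            exact ⟨(A.isCompact.isClosed.mem_iff_infDist_zero A.nonempty).2 hA0,
              (B.isCompact.isClosed.mem_iff_infDist_zero B.nonempty).2 hB0⟩
          have h0 : infDist y₀ (C : Set X) = 0 := infDist_zero_of_mem hyC
          have hge : ε / 2 ≤ infDist y₀ (C : Set X) := hy₀K
          linarith
        · exact hp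
      refine ⟨h y₀, hy₀pos, fun y hyA hyB => ?_⟩
      by_contra hcon
      have hyK : y ∈ K := le_of_not_gt hcon
      exact absurd (hy₀min hyK) (not_le.mpr (max_lt hyA hyB))
  -- Step 2: uniform recurrence data for A and B at scale δ
  obtain ⟨N₁, hN₁, hAk⟩ := hA δ hδ0
  obtain ⟨N₂, hN₂, hBk⟩ := hB δ hδ0
  -- Step 3: finite (ε/2)-net of C consisting of points of C
  obtain ⟨t, htC, htfin, htcov⟩ := C.isCompact.finite_cover_balls hε2
  -- periods of the net points
  choose p hp hfix using hper
  set L : ℕ := ∏ x ∈ htfin.toFinset, p x with hL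
  have hLpos : 0 < L := Finset.prod_pos (fun x _ => hp x)
  refine ⟨N₁ * N₂ * L, by positivity, fun k => ?_⟩
  set n : ℕ := k * (N₁ * N₂ * L) with hn
  set F : X → X := (⇑f)^[n] with hF
  have hFcont : Continuous F := f.continuous.iterate n
  -- hausdorff estimates for A and B
  have hdistA : hausdorffDist (F '' (A : Set X)) (A : Set X) < δ := by
    have := hAk (k * (N₂ * L))
    rw [NonemptyCompacts.dist_eq, hyper_iterate] at this
    have hnn : k * (N₂ * L) * N₁ = n := by rw [hn]; ring
    rwa [hnn] at this
  have hdistB : hausdorffDist (F '' (B : Set X)) (B : Set X) < δ := by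
    have := hBk (k * (N₁ * L))
    rw [NonemptyCompacts.dist_eq, hyper_iterate] at this
    have hnn : k * (N₁ * L) * N₂ = n := by rw [hn]; ring
    rwa [hnn] at this
  -- net points are fixed by F
  have hfixt : ∀ x ∈ t, F x = x := by
    intro x hx
    have hdvd : p x ∣ n := by
      refine Dvd.dvd.mul_left ?_ k
      exact Dvd.dvd.mul_left (Finset.dvd_prod_of_mem p (htfin.mem_toFinset.mpr hx)) (N₁ * N₂)
    obtain ⟨c, hc⟩ := hdvd
    have hper' : Function.IsPeriodicPt f (p x) x := hfix x
    have : Function.IsPeriodicPt f n x := by rw [hc]; exact hper'.mul_const c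
    exact this
  -- Main estimate
  rw [NonemptyCompacts.dist_eq, hyper_iterate]
  have hEA : EMetric.hausdorffEdist (F '' (A : Set X)) (A : Set X) ≠ ⊤ :=
    hausdorffEdist_ne_top_of_nonempty_of_bounded (A.nonempty.image F) A.nonempty
      (A.isCompact.image hFcont).isBounded A.isCompact.isBounded
  have hEB : EMetric.hausdorffEdist (F '' (B : Set X)) (B : Set X) ≠ ⊤ :=
    hausdorffEdist_ne_top_of_nonempty_of_bounded (B.nonempty.image F) B.nonempty
      (B.isCompact.image hFcont).isBounded B.isCompact.isBounded
  have hmain : hausdorffDist (F '' (C : Set X)) (C : Set X) ≤ ε / 2 := by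
    apply hausdorffDist_le_of_mem_dist (le_of_lt hε2)
    · rintro y ⟨c, hcC, rfl⟩
      have hcA : c ∈ (A : Set X) := (hC ▸ hcC).1
      have hcB : c ∈ (B : Set X) := (hC ▸ hcC).2
      have hyA : infDist (F c) (A : Set X) < δ :=
        lt_of_le_of_lt (infDist_le_hausdorffDist_of_mem (Set.mem_image_of_mem F hcA) hEA) hdistA
      have hyB : infDist (F c) (B : Set X) < δ :=
        lt_of_le_of_lt (infDist_le_hausdorffDist_of_mem (Set.mem_image_of_mem F hcB) hEB) hdistB
      obtain ⟨x, hxC, hxd⟩ := (infDist_lt_iff C.nonempty).mp (hδ (F c) hyA hyB)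
      exact ⟨x, hxC, le_of_lt hxd⟩
    · intro x hxC
      obtain ⟨xi, hxi, hxball⟩ := Set.mem_iUnion₂.mp (htcov hxC)
      refine ⟨xi, ⟨xi, htC hxi, hfixt xi hxi⟩, ?_⟩
      exact le_of_lt (mem_ball.mp hxball)
  linarith
end

section
/- Let f : X → X be a pointwise periodic homeomorphism of a compact metric space. If A ∈ 2^X and B ∈ 2^X is uniformly recurrent for 2^f, and the pair (A, B) is proximal under 2^f (i.e. liminf_n d_H(f^n(A), f^n(B)) = 0), then A ⊆ B. -/
open TopologicalSpace Metric Set Filter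

lemma equicont {X : Type*} [MetricSpace X] [CompactSpace X] (f : X → X) (hf : Continuous f)
    (K : ℕ) : ∀ ε > (0:ℝ), ∃ δ > (0:ℝ), ∀ j ≤ K, ∀ a b : X, dist a b < δ →
      dist (f^[j] a) (f^[j] b) < ε := by
  induction K with
  | zero =>
    intro ε hε
    exact ⟨ε, hε, fun j hj a b h => by simpa [Nat.le_zero.1 hj] using h⟩
  | succ K ih =>
    intro ε hε
    obtain ⟨δ₁, hδ₁, h1⟩ := ih ε hε
    obtain ⟨δ₂, hδ₂, h2⟩ := Metric.uniformContinuous_iff.1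
      (CompactSpace.uniformContinuous_of_continuous (hf.iterate (K+1))) ε hε
    refine ⟨min δ₁ δ₂, lt_min hδ₁ hδ₂, fun j hj a b h => ?_⟩
    rcases Nat.lt_succ_iff_lt_or_eq.1 (Nat.lt_succ_of_le hj) with hj' | rfl
    · exact h1 j (Nat.lt_succ_iff.1 hj') a b (h.trans_le (min_le_left _ _))
    · exact h2 (h.trans_le (min_le_right _ _))

lemma hyper_iter_coe {X : Type*} [MetricSpace X] (f : X ≃ₜ X) (C : NonemptyCompacts X) (n : ℕ) :
    (((hyper f)^[n] C : NonemptyCompacts X) : Set X) = (⇑f)^[n] '' C := by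
  induction n with
  | zero => simp
  | succ n ih =>
    rw [Function.iterate_succ_apply']
    show f '' (((hyper f)^[n] C : NonemptyCompacts X) : Set X) = _
    rw [ih, ← Set.image_comp, ← Function.iterate_succ' f n]

theorem stmt13 {X : Type*} [MetricSpace X] [CompactSpace X]
    (f : X ≃ₜ X) (hper : ∀ x : X, ∃ n > 0, (⇑f)^[n] x = x)
    (A B : NonemptyCompacts X)
    (hB : IsUnifRec (hyper f) B) (hprox : Proximal (hyper f) A B) :
    (A : Set X) ⊆ (B : Set X) := by
  intro x hx
  have key : ∀ ε > (0:ℝ), infDist x (B : Set X) < ε := by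
    intro ε hε
    obtain ⟨p, hp, hpx⟩ := hper x
    obtain ⟨N, hN, hNrec⟩ := hB (ε/2) (by linarith)
    set q := p * N with hq
    have hq0 : 0 < q := Nat.mul_pos hp hN
    obtain ⟨δ, hδ, hδprop⟩ := equicont f f.continuous q (ε/2) (by linarith)
    obtain ⟨n, -, hn⟩ := hprox δ hδ 0
    set M := (n / q + 1) * q with hM
    have hMe : M = n / q * q + q := by rw [hM]; ring
    have hd1 : n / q * q + n % q = n := Nat.div_add_mod' n q
    have hd2 : n % q < q := Nat.mod_lt n hq0
    have hMn : n ≤ M := by omega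
    have hMsub : M - n ≤ q := by omega
    -- x is fixed by f^[M]
    have hfix : (⇑f)^[M] x = x := by
      have : M = p * ((n / q + 1) * N) := by rw [hM, hq]; ring
      rw [this, Function.iterate_mul]
      exact Function.iterate_fixed hpx _
    -- edist finiteness helpers
    have hfin : ∀ C D : NonemptyCompacts X,
        EMetric.hausdorffEdist (C : Set X) (D : Set X) ≠ ⊤ := fun C D =>
      hausdorffEdist_ne_top_of_nonempty_of_bounded C.nonempty D.nonempty
        C.isCompact.isBounded D.isCompact.isBounded
    -- from proximality at time n
    have hxn : (⇑f)^[n] x ∈ (((hyper f)^[n] A : NonemptyCompacts X) : Set X) := by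
      rw [hyper_iter_coe]; exact mem_image_of_mem _ hx
    have h1 : infDist ((⇑f)^[n] x) (((hyper f)^[n] B : NonemptyCompacts X) : Set X) < δ :=
      lt_of_le_of_lt (infDist_le_hausdorffDist_of_mem hxn (hfin _ _))
        (by rw [← NonemptyCompacts.dist_eq]; exact hn)
    obtain ⟨y, hy, hdy⟩ := (infDist_lt_iff ((hyper f)^[n] B).nonempty).1 h1
    set j := M - n with hj
    have hjM : j + n = M := by omega
    -- push forward by f^[j]
    have h2 : dist ((⇑f)^[j] ((⇑f)^[n] x)) ((⇑f)^[j] y) < ε/2 := hδprop j hMsub _ _ hdy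
    have h2' : dist x ((⇑f)^[j] y) < ε/2 := by
      rwa [← Function.iterate_add_apply, hjM, hfix] at h2
    have h3 : (⇑f)^[j] y ∈ (((hyper f)^[M] B : NonemptyCompacts X) : Set X) := by
      rw [hyper_iter_coe] at hy ⊢
      obtain ⟨b, hb, rfl⟩ := hy
      exact ⟨b, hb, by rw [← Function.iterate_add_apply, hjM]⟩
    have h4 : infDist x (((hyper f)^[M] B : NonemptyCompacts X) : Set X) < ε/2 :=
      lt_of_le_of_lt (infDist_le_dist_of_mem h3) h2'
    -- recurrence of B at time M
    have h5 : dist ((hyper f)^[M] B) B < ε/2 := by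
      have : M = ((n / q + 1) * p) * N := by rw [hM, hq]; ring
      rw [this]; exact hNrec _
    calc infDist x (B : Set X)
        ≤ infDist x (((hyper f)^[M] B : NonemptyCompacts X) : Set X) +
          hausdorffDist (((hyper f)^[M] B : NonemptyCompacts X) : Set X) (B : Set X) :=
          infDist_le_infDist_add_hausdorffDist (hfin _ _)
      _ < ε/2 + ε/2 := by
          rw [← NonemptyCompacts.dist_eq]
          exact add_lt_add h4 h5
      _ = ε := by ring
  have h0 : infDist x (B : Set X) = 0 := by
    by_contra hne
    have hpos : 0 < infDist x (B : Set X) := lt_of_le_of_ne infDist_nonneg (Ne.symm hne)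
    exact lt_irrefl _ (key _ hpos)
  rw [← B.isCompact.isClosed.closure_eq]
  exact (mem_closure_iff_infDist_zero B.nonempty).2 h0
end
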